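/- For a symmetric friend-oriented hedonic game and any k > 0, if a partition π is IR-robust under deletion of at most k players, then every coalition S ∈ π is either a clique in the friendship graph or every player in S has at least k+1 friends in S. -/

import Mathlib

open Finset

section HedonicDefs

variable {α : Type*} [DecidableEq α] [Fintype α]

/-- Additive utility of player `i` in coalition `S`. -/
def util (w : α → α → ℤ) (S : Finset α) (i : α) : ℤ := ∑ j ∈ S, w i j

/-- `π` is a partition of the player set `V`: every player of `V` lies in its own
coalition, coalitions are contained in `V`, and membership determines the coalition. -/
def IsPartition (V : Finset α) (π : α → Finset α) : Prop :=
  (∀ i ∈ V, i ∈ π i ∧ π i ⊆ V) ∧ ∀ i ∈ V, ∀ j ∈ π i, π j = π i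

/-- `S` is a coalition of the partition `π` on `V`, or the empty coalition. -/
def IsCoalitionOf (V : Finset α) (π : α → Finset α) (S : Finset α) : Prop :=
  S = ∅ ∨ ∃ j ∈ V, S = π j

/-- Player `i` has an NS-deviation from `π i` to `S`. -/
def NSDev (w : α → α → ℤ) (V : Finset α) (π : α → Finset α) (i : α) (S : Finset α) : Prop :=
  IsCoalitionOf V π S ∧ S ≠ π i ∧ i ∉ S ∧ util w (π i) i < util w (insert i S) i

/-- Player `i` has an IS-deviation from `π i` to `S`: an NS-deviation accepted by
all members of the target coalition `S`. -/
def ISDev (w : α → α → ℤ) (V : Finset α) (π : α → Finset α) (i : α) (S : Finset α) : Prop :=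
  NSDev w V π i S ∧ ∀ j ∈ S, util w S j ≤ util w (insert i S) j

/-- Player `i` has a CIS-deviation from `π i` to `S`: an IS-deviation also accepted by
all members of the abandoned coalition. -/
def CISDev (w : α → α → ℤ) (V : Finset α) (π : α → Finset α) (i : α) (S : Finset α) : Prop :=
  ISDev w V π i S ∧ ∀ j ∈ (π i).erase i, util w (π i) j ≤ util w ((π i).erase i) j

def NashStable (w : α → α → ℤ) (V : Finset α) (π : α → Finset α) : Prop :=
  ∀ i ∈ V, ∀ S : Finset α, ¬ NSDev w V π i S

def IndStable (w : α → α → ℤ) (V : Finset α) (π : α → Finset α) : Prop :=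
  ∀ i ∈ V, ∀ S : Finset α, ¬ ISDev w V π i S

def CIStable (w : α → α → ℤ) (V : Finset α) (π : α → Finset α) : Prop :=
  ∀ i ∈ V, ∀ S : Finset α, ¬ CISDev w V π i S

/-- Individual rationality: each player weakly prefers its coalition to being alone
(being alone gives utility `w i i = 0`). -/
def IndRational (w : α → α → ℤ) (V : Finset α) (π : α → Finset α) : Prop :=
  ∀ i ∈ V, 0 ≤ util w (π i) i

/-- Core stability: no nonempty coalition strongly blocks `π`. -/
def CoreStable (w : α → α → ℤ) (V : Finset α) (π : α → Finset α) : Prop :=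
  ¬ ∃ S : Finset α, S ⊆ V ∧ S.Nonempty ∧ ∀ i ∈ S, util w (π i) i < util w S i

/-- `π` is robust for the stability notion `St` under deletion of at most `k` players:
`π` satisfies `St` and so does its truncation after removing any `X` with `|X| ≤ k`. -/
def Robust (St : Finset α → (α → Finset α) → Prop) (V : Finset α)
    (π : α → Finset α) (k : ℕ) : Prop :=
  St V π ∧ ∀ X ⊆ V, X.card ≤ k → St (V \ X) (fun i => π i \ X)

/-- Symmetric friend-oriented game: symmetric weights, zero on the diagonal, and each
off-diagonal weight equals `n` (friends) or `-1` (enemies), where `n` is the number of players. -/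
def FriendOriented (w : α → α → ℤ) : Prop :=
  (∀ i j : α, w i j = w j i) ∧ (∀ i : α, w i i = 0) ∧
    ∀ i j : α, i ≠ j → w i j = (Fintype.card α : ℤ) ∨ w i j = -1

/-- `j` is a friend of `i`. -/
def Friend (w : α → α → ℤ) (i j : α) : Prop := i ≠ j ∧ 0 < w i j


instance (w : α → α → ℤ) (i j : α) : Decidable (Friend w i j) :=
  inferInstanceAs (Decidable (_ ∧ _))

/-- `S` is a clique of the friendship graph. -/
def IsClique (w : α → α → ℤ) (S : Finset α) : Prop :=
  ∀ i ∈ S, ∀ j ∈ S, i ≠ j → Friend w i j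

/-- Two players lie in the same connected component of the friendship graph. -/
def SameComp (w : α → α → ℤ) : α → α → Prop :=
  Relation.ReflTransGen (fun a b => Friend w a b)

/-- The connected component of `v` in the friendship graph, as a set. -/
def comp (w : α → α → ℤ) (v : α) : Set α := {u | SameComp w v u}

end HedonicDefs
/-- In a symmetric friend-oriented game, for `k > 0`, each coalition of an
IR-robust partition is a clique or every member has at least `k+1` friends inside it. -/
theorem ir_robust_clique_or_min_degree {α : Type*} [DecidableEq α] [Fintype α]
    (w : α → α → ℤ) (hw : FriendOriented w) (k : ℕ) (hk : 0 < k)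
    (π : α → Finset α) (hπ : IsPartition (Finset.univ : Finset α) π)
    (hrob : Robust (IndRational w) Finset.univ π k) :
    ∀ i : α, IsClique w (π i) ∨
      ∀ j ∈ π i, k + 1 ≤ ((π i).filter (fun l => Friend w j l)).card := by
  intro i
  by_cases hcl : IsClique w (π i)
  · exact Or.inl hcl
  right
  intro j hj
  by_contra hlt
  push_neg at hlt
  have hF : ((π i).filter (fun l => Friend w j l)).card ≤ k := by omega
  set F := (π i).filter (fun l => Friend w j l) with hFdef
  have hn : (0:ℤ) < (Fintype.card α : ℤ) := by
    have : 0 < Fintype.card α := Fintype.card_pos_iff.mpr ⟨j⟩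
    exact_mod_cast this
  have hw2 : ∀ x y : α, x ≠ y → ¬ Friend w x y → w x y = -1 := by
    intro x y hxy hnf
    rcases hw.2.2 x y hxy with h | h
    · exact absurd ⟨hxy, h ▸ hn⟩ hnf
    · exact h
  have hfs : ∀ x y, Friend w x y → Friend w y x := by
    intro x y hf
    exact ⟨hf.1.symm, hw.1 x y ▸ hf.2⟩
  have hπi : ∀ l ∈ π i, π l = π i := fun l hl => hπ.2 i (Finset.mem_univ i) l hl
  by_cases he : ∃ e ∈ π i, e ≠ j ∧ ¬ Friend w j e
  · obtain ⟨e, heS, hej, hnfe⟩ := he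
    have hjF : j ∉ F := by rw [hFdef, Finset.mem_filter]; exact fun h => h.2.1 rfl
    have hIR := hrob.2 F (Finset.subset_univ F) hF j (by simp [hjF])
    have hπj : π j = π i := hπi j hj
    replace hIR : 0 ≤ util w (π i \ F) j := by simpa [hπj] using hIR
    have heF : e ∈ π i \ F := by
      simp only [hFdef, Finset.mem_sdiff, Finset.mem_filter]
      exact ⟨heS, fun h => hnfe h.2⟩
    have hje : w j e = -1 := hw2 j e (Ne.symm hej) hnfe
    have hutil : util w (π i \ F) j ≤ -1 := by
      unfold util
      rw [← Finset.add_sum_erase _ _ heF, hje]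
      have hle : ∑ l ∈ (π i \ F).erase e, w j l ≤ 0 := by
        apply Finset.sum_nonpos
        intro l hl
        rcases eq_or_ne l j with rfl | hlj
        · simp [hw.2.1]
        · have hlF : l ∈ π i \ F := Finset.mem_of_mem_erase hl
          have hlS : l ∈ π i := (Finset.mem_sdiff.mp hlF).1
          have hlnF : l ∉ F := (Finset.mem_sdiff.mp hlF).2
          have hnfl : ¬ Friend w j l := fun hf =>
            hlnF (by simp [hFdef, hlS, hf])
          rw [hw2 j l (Ne.symm hlj) hnfl]; omega
      omega
    omega
  · push_neg at he
    simp only [IsClique, not_forall] at hcl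
    obtain ⟨a, ha, b, hb, hab, hnf⟩ := hcl
    have haj : a ≠ j := by
      rintro rfl
      exact hnf (he b hb hab.symm)
    have hbj : b ≠ j := by
      rintro rfl
      exact hnf (hfs _ _ (he a ha haj))
    have hsub : π i ⊆ insert j F := by
      intro l hl
      rcases eq_or_ne l j with rfl | hlj
      · exact Finset.mem_insert_self _ _
      · exact Finset.mem_insert_of_mem (by simp [hFdef, hl, he l hl hlj])
    have hcard : (π i).card ≤ k + 1 := by
      calc (π i).card ≤ (insert j F).card := Finset.card_le_card hsub
        _ ≤ F.card + 1 := Finset.card_insert_le _ _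
        _ ≤ k + 1 := by omega
    set X := π i \ {a, b} with hXdef
    have habsub : ({a, b} : Finset α) ⊆ π i := by
      intro x hx
      rcases Finset.mem_insert.mp hx with rfl | hx
      · exact ha
      · rw [Finset.mem_singleton.mp hx]; exact hb
    have hXcard : X.card ≤ k := by
      rw [hXdef, Finset.card_sdiff_of_subset habsub, Finset.card_pair hab]
      omega
    have haX : a ∉ X := by simp [hXdef]
    have hIR := hrob.2 X (Finset.subset_univ X) hXcard a (by simp [haX])
    have hπa : π a = π i := hπi a ha
    have hrest : π i \ X = {a, b} := by
      rw [hXdef, Finset.sdiff_sdiff_self_left, Finset.inter_eq_right.mpr habsub]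
    replace hIR : 0 ≤ util w ({a, b} : Finset α) a := by simpa [hπa, hrest] using hIR
    have hwab : w a b = -1 := hw2 a b hab hnf
    have hua : util w {a, b} a = -1 := by
      unfold util
      rw [Finset.sum_pair hab, hw.2.1, hwab]
      ring
    omega
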